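/- Under the same hypotheses as the previous lemma, the iterates satisfy lim‖x_n − PT₁ x_n‖ = 0 and lim‖x_n − PT₂ x_n‖ = 0. -/

import Mathlib

open Filter

private lemma myUC {E : Type*} [NormedAddCommGroup E] [NormedSpace ℝ E] [UniformConvexSpace E]
    {eps : ℝ} (heps : 0 < eps) :
    ∃ δ, 0 < δ ∧ ∀ (R : ℝ), 0 < R → ∀ (u v : E), ‖u‖ ≤ R → ‖v‖ ≤ R → eps * R ≤ ‖u - v‖ →
      ‖u + v‖ ≤ (2 - δ) * R := by
  obtain ⟨δ, hδ, h⟩ := exists_forall_closed_ball_dist_add_le_two_sub E heps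
  refine ⟨δ, hδ, fun R hR u v hu hv huv => ?_⟩
  have hRinv : (0:ℝ) ≤ R⁻¹ := by positivity
  have h1 : ‖R⁻¹ • u‖ ≤ 1 := by
    rw [norm_smul, Real.norm_eq_abs, abs_of_nonneg hRinv]
    calc R⁻¹ * ‖u‖ ≤ R⁻¹ * R := by gcongr
      _ = 1 := inv_mul_cancel₀ hR.ne'
  have h2 : ‖R⁻¹ • v‖ ≤ 1 := by
    rw [norm_smul, Real.norm_eq_abs, abs_of_nonneg hRinv]
    calc R⁻¹ * ‖v‖ ≤ R⁻¹ * R := by gcongr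
      _ = 1 := inv_mul_cancel₀ hR.ne'
  have h3 : eps ≤ ‖R⁻¹ • u - R⁻¹ • v‖ := by
    rw [← smul_sub, norm_smul, Real.norm_eq_abs, abs_of_nonneg hRinv]
    have := mul_le_mul_of_nonneg_left huv hRinv
    calc eps = R⁻¹ * (eps * R) := by field_simp
      _ ≤ R⁻¹ * ‖u - v‖ := by gcongr
  have h4 := h h1 h2 h3
  rw [← smul_add, norm_smul, Real.norm_eq_abs, abs_of_nonneg hRinv] at h4
  have := mul_le_mul_of_nonneg_left h4 hR.le
  calc ‖u + v‖ = R * (R⁻¹ * ‖u + v‖) := by field_simp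
    _ ≤ R * (2 - δ) := by exact this
    _ = (2 - δ) * R := mul_comm _ _

private lemma myFreq {f : ℕ → ℝ} (hf : ∀ n, 0 ≤ f n)
    (h : ¬ Tendsto f atTop (nhds 0)) : ∃ c, 0 < c ∧ ∃ᶠ n in atTop, c ≤ f n := by
  by_contra hc
  push_neg at hc
  apply h
  rw [Metric.tendsto_atTop]
  intro δ hδ
  have h2 : ∀ᶠ n in atTop, ¬ (δ/2 ≤ f n) := (hc (δ/2) (by linarith)).mono fun n hn => not_le.mpr hn
  obtain ⟨N, hN⟩ := eventually_atTop.mp h2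
  refine ⟨N, fun n hn => ?_⟩
  have := hN n hn
  rw [Real.dist_eq, sub_zero, abs_of_nonneg (hf n)]
  linarith [not_le.mp this]

private lemma mySchu {E : Type*} [NormedAddCommGroup E] [NormedSpace ℝ E] [UniformConvexSpace E]
    (r eps : ℝ) (hr : 0 ≤ r) (heps : 0 < eps)
    (u v : ℕ → E) (t : ℕ → ℝ) (ht : ∀ n, t n ∈ Set.Icc eps (1 - eps))
    (hu : ∀ η, 0 < η → ∀ᶠ n in atTop, ‖u n‖ ≤ r + η)
    (hv : ∀ η, 0 < η → ∀ᶠ n in atTop, ‖v n‖ ≤ r + η)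
    (hw : Tendsto (fun n => ‖t n • u n + (1 - t n) • v n‖) atTop (nhds r)) :
    Tendsto (fun n => ‖u n - v n‖) atTop (nhds 0) := by
  rcases eq_or_lt_of_le hr with hr0 | hr0
  · have hg : Tendsto (fun n => ‖u n‖ + ‖v n‖) atTop (nhds 0) := by
      rw [Metric.tendsto_atTop]
      intro δ hδ
      obtain ⟨N1, hN1⟩ := eventually_atTop.mp (hu (δ/4) (by linarith))
      obtain ⟨N2, hN2⟩ := eventually_atTop.mp (hv (δ/4) (by linarith))
      refine ⟨max N1 N2, fun n hn => ?_⟩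
      have h1 := hN1 n (le_trans (le_max_left _ _) hn)
      have h2 := hN2 n (le_trans (le_max_right _ _) hn)
      rw [Real.dist_eq, sub_zero, abs_of_nonneg (by positivity)]
      have : r = 0 := hr0.symm
      linarith
    exact squeeze_zero' (Eventually.of_forall fun n => norm_nonneg _)
      (Eventually.of_forall fun n => norm_sub_le _ _) hg
  · by_contra hcon
    obtain ⟨c, hc, hfreq⟩ := myFreq (fun n => norm_nonneg _) hcon
    obtain ⟨δ, hδ, hUC⟩ := myUC (E := E) (show 0 < c / (r+1) by positivity)
    set η := min 1 (eps * δ * r / 2) with hηdef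
    have hη0 : 0 < η := lt_min one_pos (by positivity)
    have hη1 : η ≤ 1 := min_le_left _ _
    have hkey : (1 - eps * δ) * (r + η) < r := by
      have h2 : η ≤ eps*δ*r/2 := min_le_right _ _
      nlinarith [mul_pos (mul_pos heps hδ) hη0, mul_pos (mul_pos heps hδ) hr0]
    have hev : ∀ᶠ n in atTop, (‖u n‖ ≤ r + η ∧ ‖v n‖ ≤ r + η) ∧
        (1 - eps*δ)*(r+η) < ‖t n • u n + (1 - t n) • v n‖ :=
      ((hu η hη0).and (hv η hη0)).and (hw.eventually (eventually_gt_nhds hkey))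
    obtain ⟨n, hcn, ⟨⟨hun, hvn⟩, hwn⟩⟩ := (hfreq.and_eventually hev).exists
    have hR : 0 < r + η := by linarith
    have h3 : (c/(r+1)) * (r+η) ≤ ‖u n - v n‖ := by
      have h4 : (c/(r+1))*(r+η) ≤ c := by
        rw [div_mul_eq_mul_div, div_le_iff₀ (by linarith : (0:ℝ) < r + 1)]
        nlinarith
      linarith
    have h4 := hUC (r+η) hR (u n) (v n) hun hvn h3
    obtain ⟨ht1, ht2⟩ := ht n
    have hteps : 0 < t n := lt_of_lt_of_le heps ht1
    have ht1' : t n ≤ 1 - eps := ht2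
    have hwb : ‖t n • u n + (1 - t n) • v n‖ ≤ (1 - eps*δ)*(r+η) := by
      rcases le_or_gt (t n) (1/2) with hhalf | hhalf
      · have hrw : t n • u n + (1 - t n) • v n = t n • (u n + v n) + (1 - 2*t n) • v n := by
          module
        calc ‖t n • u n + (1 - t n) • v n‖
            ≤ ‖t n • (u n + v n)‖ + ‖(1 - 2*t n) • v n‖ := by rw [hrw]; exact norm_add_le _ _
          _ = t n * ‖u n + v n‖ + (1 - 2*t n) * ‖v n‖ := by
              rw [norm_smul, norm_smul, Real.norm_eq_abs, Real.norm_eq_abs,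
                abs_of_nonneg hteps.le, abs_of_nonneg (by linarith)]
          _ ≤ t n * ((2-δ)*(r+η)) + (1 - 2*t n) * (r+η) := by
              exact add_le_add (mul_le_mul_of_nonneg_left h4 hteps.le)
                (mul_le_mul_of_nonneg_left hvn (by linarith))
          _ ≤ (1 - eps*δ)*(r+η) := by
              nlinarith [mul_nonneg (mul_nonneg (sub_nonneg.mpr ht1) hδ.le) hR.le]
      · have hrw : t n • u n + (1 - t n) • v n = (1 - t n) • (u n + v n) + (2*t n - 1) • u n := by
          module
        have heps' : eps ≤ 1 - t n := by linarith
        calc ‖t n • u n + (1 - t n) • v n‖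
            ≤ ‖(1 - t n) • (u n + v n)‖ + ‖(2*t n - 1) • u n‖ := by rw [hrw]; exact norm_add_le _ _
          _ = (1 - t n) * ‖u n + v n‖ + (2*t n - 1) * ‖u n‖ := by
              rw [norm_smul, norm_smul, Real.norm_eq_abs, Real.norm_eq_abs,
                abs_of_nonneg (by linarith), abs_of_nonneg (by linarith)]
          _ ≤ (1 - t n) * ((2-δ)*(r+η)) + (2*t n - 1) * (r+η) := by
              exact add_le_add (mul_le_mul_of_nonneg_left h4 (by linarith))
                (mul_le_mul_of_nonneg_left hun (by linarith))
          _ ≤ (1 - eps*δ)*(r+η) := by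
              nlinarith [mul_nonneg (mul_nonneg (sub_nonneg.mpr heps') hδ.le) hR.le]
    exact absurd hwb (not_le.mpr hwn)

private lemma myConv (d a b : ℕ → ℝ) (hd : ∀ n, 0 ≤ d n) (ha : ∀ n, 0 ≤ a n) (hb : ∀ n, 0 ≤ b n)
    (has : Summable a) (hbs : Summable b)
    (hrec : ∀ n, 1 ≤ n → d (n+1) ≤ (1 + a n) * d n + b n) :
    ∃ l B, 0 ≤ l ∧ Tendsto d atTop (nhds l) ∧ 0 ≤ B ∧ ∀ n, d n ≤ B := by
  have hbound : ∀ n, 1 ≤ n → d n ≤ (d 1 + ∑' k, b k) * Real.exp (∑' k, a k) := by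
    have key : ∀ n, 1 ≤ n →
        d n ≤ (d 1 + ∑ k ∈ Finset.range n, b k) * Real.exp (∑ k ∈ Finset.range n, a k) := by
      intro n hn
      induction n, hn using Nat.le_induction with
      | base =>
        have h1 : (0:ℝ) ≤ ∑ k ∈ Finset.range 1, b k := Finset.sum_nonneg fun i _ => hb i
        have h2 : (1:ℝ) ≤ Real.exp (∑ k ∈ Finset.range 1, a k) :=
          Real.one_le_exp (Finset.sum_nonneg fun i _ => ha i)
        nlinarith [hd 1]
      | succ n hn ih =>
        have h1 := hrec n hn
        have hsnn : 0 ≤ d 1 + ∑ k ∈ Finset.range n, b k :=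
          add_nonneg (hd 1) (Finset.sum_nonneg fun i _ => hb i)
        have hexp1 : 1 ≤ Real.exp (∑ k ∈ Finset.range n, a k) :=
          Real.one_le_exp (Finset.sum_nonneg fun i _ => ha i)
        have hexpa : 1 ≤ Real.exp (a n) := Real.one_le_exp (ha n)
        have hea : 1 + a n ≤ Real.exp (a n) := by linarith [Real.add_one_le_exp (a n)]
        calc d (n+1) ≤ (1 + a n) * d n + b n := h1
          _ ≤ (1 + a n) * ((d 1 + ∑ k ∈ Finset.range n, b k) *
              Real.exp (∑ k ∈ Finset.range n, a k)) + b n :=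
            add_le_add (mul_le_mul_of_nonneg_left ih (by linarith [ha n])) le_rfl
          _ ≤ Real.exp (a n) * ((d 1 + ∑ k ∈ Finset.range n, b k) *
              Real.exp (∑ k ∈ Finset.range n, a k)) + b n :=
            add_le_add (mul_le_mul_of_nonneg_right hea
              (mul_nonneg hsnn (Real.exp_nonneg _))) le_rfl
          _ ≤ (d 1 + ∑ k ∈ Finset.range (n+1), b k) * Real.exp (∑ k ∈ Finset.range (n+1), a k) := by
            rw [Finset.sum_range_succ b, Finset.sum_range_succ a, Real.exp_add]
            have h15 : (1:ℝ) ≤ Real.exp (∑ k ∈ Finset.range n, a k) * Real.exp (a n) :=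
              one_le_mul_of_one_le_of_one_le hexp1 hexpa
            nlinarith [mul_le_mul_of_nonneg_left h15 (hb n)]
    intro n hn
    have h := key n hn
    have h1 : ∑ k ∈ Finset.range n, b k ≤ ∑' k, b k := Summable.sum_le_tsum _ (fun i _ => hb i) hbs
    have h2 : ∑ k ∈ Finset.range n, a k ≤ ∑' k, a k := Summable.sum_le_tsum _ (fun i _ => ha i) has
    have h3 : Real.exp (∑ k ∈ Finset.range n, a k) ≤ Real.exp (∑' k, a k) :=
      Real.exp_le_exp.mpr h2
    have h4 : 0 ≤ d 1 + ∑ k ∈ Finset.range n, b k :=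
      add_nonneg (hd 1) (Finset.sum_nonneg fun i _ => hb i)
    refine h.trans (mul_le_mul (by linarith) h3 (Real.exp_nonneg _) ?_)
    have : 0 ≤ ∑' k, b k := tsum_nonneg hb
    linarith [hd 1]
  set B := max (d 0) ((d 1 + ∑' k, b k) * Real.exp (∑' k, a k)) with hBdef
  have hB : ∀ n, d n ≤ B := by
    intro n
    match n with
    | 0 => exact le_max_left _ _
    | (m+1) => exact le_trans (hbound (m+1) (Nat.succ_le_succ (Nat.zero_le m))) (le_max_right _ _)
  have hBnn : 0 ≤ B := le_trans (hd 0) (le_max_left _ _)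
  set c := fun n => a n * B + b n with hcdef
  have hcs : Summable c := (has.mul_right B).add hbs
  have hcnn : ∀ n, 0 ≤ c n := fun n => add_nonneg (mul_nonneg (ha n) hBnn) (hb n)
  set tail := fun n => ∑' k, c (k + n) with htaildef
  have htail_nn : ∀ n, 0 ≤ tail n := fun n => tsum_nonneg fun k => hcnn _
  have htail0 : Tendsto tail atTop (nhds 0) := by
    have heq : ∀ n, tail n = (∑' k, c k) - ∑ k ∈ Finset.range n, c k := by
      intro n
      have := Summable.sum_add_tsum_nat_add n hcs
      simp only [htaildef]
      linarith
    have h2 : Tendsto (fun n => (∑' k, c k) - ∑ k ∈ Finset.range n, c k) atTop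
        (nhds ((∑' k, c k) - (∑' k, c k))) :=
      tendsto_const_nhds.sub hcs.hasSum.tendsto_sum_nat
    rw [show tail = fun n => (∑' k, c k) - ∑ k ∈ Finset.range n, c k from funext heq]
    simpa using h2
  have hrec2 : ∀ n, 1 ≤ n → d (n+1) ≤ d n + c n := by
    intro n hn
    have h1 := hrec n hn
    have h2 := mul_le_mul_of_nonneg_left (hB n) (ha n)
    simp only [hcdef]
    nlinarith
  have htail_rec : ∀ n, tail n = c n + tail (n+1) := by
    intro n
    have hsum : Summable (fun k => c (k + n)) := (summable_nat_add_iff n).mpr hcs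
    have h := Summable.tsum_eq_zero_add hsum
    simp only [htaildef]
    calc (∑' k, c (k + n)) = c (0 + n) + ∑' k, c (k + 1 + n) := h
      _ = c n + ∑' k, c (k + (n+1)) := by
          rw [zero_add]
          congr 1
          apply tsum_congr
          intro k
          congr 1
          omega
  have hganti : Antitone (fun n => d (n+1) + tail (n+1)) := by
    apply antitone_nat_of_succ_le
    intro n
    have h1 := hrec2 (n+1) (Nat.le_add_left 1 n)
    have h2 := htail_rec (n+1)
    show d (n+1+1) + tail (n+1+1) ≤ d (n+1) + tail (n+1)
    linarith
  have hgbdd : BddBelow (Set.range (fun n => d (n+1) + tail (n+1))) := by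
    refine ⟨0, fun z hz => ?_⟩
    obtain ⟨n, rfl⟩ := hz
    exact add_nonneg (hd _) (htail_nn _)
  have hgl := tendsto_atTop_ciInf hganti hgbdd
  have hdl : Tendsto (fun n => d (n+1)) atTop (nhds (⨅ n, (d (n+1) + tail (n+1)))) := by
    have h2 : Tendsto (fun n => (d (n+1) + tail (n+1)) - tail (n+1)) atTop
        (nhds ((⨅ n, (d (n+1) + tail (n+1))) - 0)) :=
      hgl.sub (htail0.comp (tendsto_add_atTop_nat 1))
    simpa using h2
  refine ⟨_, B, ge_of_tendsto' hdl fun n => hd _, (tendsto_add_atTop_iff_nat 1).mp hdl, hBnn, hB⟩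
theorem stmt_14 {E : Type*} [NormedAddCommGroup E] [NormedSpace ℝ E]
    [UniformConvexSpace E] [CompleteSpace E]
    (K : Set E) (hKne : K.Nonempty) (hKclosed : IsClosed K) (hKconvex : Convex ℝ K)
    (P T₁ T₂ : E → E)
    (hPrange : ∀ x, P x ∈ K)
    (hPnonexp : ∀ x y, ‖P x - P y‖ ≤ ‖x - y‖)
    (hPretr : ∀ x ∈ K, P x = x)
    (L : ℝ) (hL : 0 < L)
    (hLip₁ : ∀ x ∈ K, ∀ y ∈ K, ∀ n ≥ 1, ‖(P ∘ T₁)^[n] x - (P ∘ T₁)^[n] y‖ ≤ L * ‖x - y‖)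
    (hLip₂ : ∀ x ∈ K, ∀ y ∈ K, ∀ n ≥ 1, ‖(P ∘ T₂)^[n] x - (P ∘ T₂)^[n] y‖ ≤ L * ‖x - y‖)
    (μ lam : ℕ → ℝ)
    (hμ : ∀ n, 0 ≤ μ n) (hlam : ∀ n, 0 ≤ lam n)
    (hμs : Summable μ) (hlams : Summable lam)
    (φ : ℝ → ℝ) (hφmono : StrictMonoOn φ (Set.Ici (0 : ℝ)))
    (hφcont : ContinuousOn φ (Set.Ici (0 : ℝ))) (hφ0 : φ 0 = 0)
    (M Mstar : ℝ) (hM : 0 < M) (hMstar : 0 < Mstar)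
    (hgrowth : ∀ κ ≥ M, φ κ ≤ Mstar * κ)
    (hT₁ : ∀ x ∈ K, ∀ y ∈ K, ∀ n ≥ 1,
      ‖(P ∘ T₁)^[n] x - (P ∘ T₁)^[n] y‖ ≤ ‖x - y‖ + μ n * φ ‖x - y‖ + lam n)
    (hT₂ : ∀ x ∈ K, ∀ y ∈ K, ∀ n ≥ 1,
      ‖(P ∘ T₂)^[n] x - (P ∘ T₂)^[n] y‖ ≤ ‖x - y‖ + μ n * φ ‖x - y‖ + lam n)
    (F : Set E) (hF : F = {x ∈ K | T₁ x = x ∧ T₂ x = x}) (hFne : F.Nonempty)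
    (ε : ℝ) (hε : ε ∈ Set.Ioo (0 : ℝ) 1)
    (α β : ℕ → ℝ)
    (hα : ∀ n, α n ∈ Set.Icc ε (1 - ε)) (hβ : ∀ n, β n ∈ Set.Icc ε (1 - ε))
    (x y : ℕ → E) (hxK : ∀ n, x n ∈ K)
    (hy : ∀ n ≥ 1, y n = (1 - β n) • x n + β n • (P ∘ T₁)^[n] (x n))
    (hx : ∀ n ≥ 1, x (n + 1) = (1 - α n) • (P ∘ T₁)^[n] (y n) + α n • (P ∘ T₂)^[n] (y n)) :
    Filter.Tendsto (fun n => ‖x n - (P ∘ T₁) (x n)‖) Filter.atTop (nhds 0) ∧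
    Filter.Tendsto (fun n => ‖x n - (P ∘ T₂) (x n)‖) Filter.atTop (nhds 0) := by
  obtain ⟨p, hpF⟩ := hFne
  rw [hF] at hpF
  obtain ⟨hpK, hp1, hp2⟩ := hpF
  have hfix1 : ∀ n, (P ∘ T₁)^[n] p = p :=
    Function.iterate_fixed (by simp only [Function.comp_apply, hp1]; exact hPretr p hpK)
  have hfix2 : ∀ n, (P ∘ T₂)^[n] p = p :=
    Function.iterate_fixed (by simp only [Function.comp_apply, hp2]; exact hPretr p hpK)
  obtain ⟨hε0, hε1⟩ := hε
  -- membership of iterates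
  have hKiter1 : ∀ (z : E) (n : ℕ), 1 ≤ n → (P ∘ T₁)^[n] z ∈ K := by
    intro z n hn
    obtain ⟨m, rfl⟩ : ∃ m, n = m + 1 := ⟨n - 1, by omega⟩
    rw [Function.iterate_succ_apply']
    exact hPrange _
  have hKiter2 : ∀ (z : E) (n : ℕ), 1 ≤ n → (P ∘ T₂)^[n] z ∈ K := by
    intro z n hn
    obtain ⟨m, rfl⟩ : ∃ m, n = m + 1 := ⟨n - 1, by omega⟩
    rw [Function.iterate_succ_apply']
    exact hPrange _
  have hβ0 : ∀ n, 0 ≤ β n := fun n => le_trans hε0.le (hβ n).1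
  have hβ1 : ∀ n, β n ≤ 1 := fun n => le_trans (hβ n).2 (by linarith)
  have hα0 : ∀ n, 0 ≤ α n := fun n => le_trans hε0.le (hα n).1
  have hα1 : ∀ n, α n ≤ 1 := fun n => le_trans (hα n).2 (by linarith)
  have hyK : ∀ n, 1 ≤ n → y n ∈ K := by
    intro n hn
    rw [hy n hn]
    exact hKconvex (hxK n) (hKiter1 (x n) n hn) (by linarith [hβ1 n]) (hβ0 n) (by ring)
  -- φ bound
  have hφMnn : 0 ≤ φ M := by
    have := hφmono (Set.mem_Ici.mpr le_rfl) (Set.mem_Ici.mpr hM.le) hM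
    linarith [hφ0]
  have hφM : ∀ s, 0 ≤ s → φ s ≤ φ M + Mstar * s := by
    intro s hs
    rcases le_or_gt s M with h | h
    · have h1 : φ s ≤ φ M := by
        rcases eq_or_lt_of_le h with rfl | h'
        · exact le_refl _
        · exact (hφmono (Set.mem_Ici.mpr hs) (Set.mem_Ici.mpr hM.le) h').le
      nlinarith
    · have h1 := hgrowth s h.le
      nlinarith
  -- key one-step bounds toward p
  have key₁ : ∀ z ∈ K, ∀ n, 1 ≤ n →
      ‖(P ∘ T₁)^[n] z - p‖ ≤ (1 + Mstar * μ n) * ‖z - p‖ + (φ M * μ n + lam n) := by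
    intro z hz n hn
    have h := hT₁ z hz p hpK n hn
    rw [hfix1 n] at h
    have h2 := hφM ‖z - p‖ (norm_nonneg _)
    linarith [mul_le_mul_of_nonneg_left h2 (hμ n)]
  have key₂ : ∀ z ∈ K, ∀ n, 1 ≤ n →
      ‖(P ∘ T₂)^[n] z - p‖ ≤ (1 + Mstar * μ n) * ‖z - p‖ + (φ M * μ n + lam n) := by
    intro z hz n hn
    have h := hT₂ z hz p hpK n hn
    rw [hfix2 n] at h
    have h2 := hφM ‖z - p‖ (norm_nonneg _)
    linarith [mul_le_mul_of_nonneg_left h2 (hμ n)]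
  -- convex combination norm bound
  have hcomb : ∀ (a : ℝ) (u v q : E), 0 ≤ a → a ≤ 1 →
      ‖(1-a) • u + a • v - q‖ ≤ (1-a) * ‖u - q‖ + a * ‖v - q‖ := by
    intro a u v q h0 h1
    have h : (1-a) • u + a • v - q = (1-a) • (u - q) + a • (v - q) := by module
    rw [h]
    calc ‖(1-a) • (u - q) + a • (v - q)‖ ≤ ‖(1-a) • (u - q)‖ + ‖a • (v - q)‖ := norm_add_le _ _
      _ = (1-a) * ‖u - q‖ + a * ‖v - q‖ := by
          rw [norm_smul, norm_smul, Real.norm_eq_abs, Real.norm_eq_abs,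
            abs_of_nonneg (by linarith), abs_of_nonneg h0]
  -- bound for ‖y n - p‖
  have hybound : ∀ n, 1 ≤ n →
      ‖y n - p‖ ≤ (1 + Mstar * μ n) * ‖x n - p‖ + (φ M * μ n + lam n) := by
    intro n hn
    rw [hy n hn]
    have h1 := hcomb (β n) (x n) ((P ∘ T₁)^[n] (x n)) p (hβ0 n) (hβ1 n)
    have h2 := key₁ (x n) (hxK n) n hn
    have h4e : (0:ℝ) ≤ φ M * μ n + lam n := add_nonneg (mul_nonneg hφMnn (hμ n)) (hlam n)
    have hA : (0:ℝ) ≤ (1 - β n) * (Mstar * (μ n * ‖x n - p‖)) :=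
      mul_nonneg (by linarith [hβ1 n]) (mul_nonneg hMstar.le (mul_nonneg (hμ n) (norm_nonneg _)))
    have hB' : (0:ℝ) ≤ (1 - β n) * (φ M * μ n + lam n) :=
      mul_nonneg (by linarith [hβ1 n]) h4e
    linarith [h1, mul_le_mul_of_nonneg_left h2 (hβ0 n), hA, hB']
  -- recursion for d
  have hd1 : ∀ n, 1 ≤ n →
      ‖x (n+1) - p‖ ≤ (1 + Mstar * μ n) * ‖y n - p‖ + (φ M * μ n + lam n) := by
    intro n hn
    rw [hx n hn]
    have h1 := hcomb (α n) ((P ∘ T₁)^[n] (y n)) ((P ∘ T₂)^[n] (y n)) p (hα0 n) (hα1 n)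
    have h2 := key₁ (y n) (hyK n hn) n hn
    have h3 := key₂ (y n) (hyK n hn) n hn
    linarith [h1, mul_le_mul_of_nonneg_left h2 (by linarith [hα1 n] : (0:ℝ) ≤ 1 - α n),
      mul_le_mul_of_nonneg_left h3 (hα0 n)]
  have hCμnn : 0 ≤ ∑' k, μ k := tsum_nonneg hμ
  have hCμ : ∀ n, μ n ≤ ∑' k, μ k := fun n => Summable.le_tsum hμs n (fun j _ => hμ j)
  have hClam : ∀ n, lam n ≤ ∑' k, lam k := fun n => Summable.le_tsum hlams n (fun j _ => hlam j)
  have hClamnn : 0 ≤ ∑' k, lam k := tsum_nonneg hlam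
  -- composite recursion
  obtain ⟨l, B, hl0, hdl, hBnn, hdB⟩ := myConv (fun n => ‖x n - p‖)
      (fun n => (Mstar * (2 + Mstar * (∑' k, μ k))) * μ n)
      (fun n => (2 + Mstar * (∑' k, μ k)) * (φ M * μ n + lam n))
      (fun n => norm_nonneg _)
      (fun n => mul_nonneg (mul_nonneg hMstar.le (by linarith [mul_nonneg hMstar.le hCμnn])) (hμ n))
      (fun n => mul_nonneg (by linarith [mul_nonneg hMstar.le hCμnn]) (add_nonneg (mul_nonneg hφMnn (hμ n)) (hlam n)))
      (hμs.mul_left _) (((hμs.mul_left (φ M)).add hlams).mul_left _)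
      (by
        intro n hn
        show ‖x (n+1) - p‖ ≤ (1 + Mstar * (2 + Mstar * (∑' k, μ k)) * μ n) * ‖x n - p‖
          + (2 + Mstar * (∑' k, μ k)) * (φ M * μ n + lam n)
        have h1 := hd1 n hn
        have h2 := hybound n hn
        have h3 := hCμ n
        have h4 : 0 ≤ φ M * μ n + lam n := add_nonneg (mul_nonneg hφMnn (hμ n)) (hlam n)
        have h0 : (0:ℝ) ≤ 1 + Mstar * μ n := by
          linarith [mul_nonneg hMstar.le (hμ n)]
        linarith [h1, mul_le_mul_of_nonneg_left h2 h0,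
          mul_le_mul_of_nonneg_left h3 (mul_nonneg (mul_nonneg hMstar.le hMstar.le)
            (mul_nonneg (hμ n) (norm_nonneg (x n - p)))),
          mul_le_mul_of_nonneg_left h3 (mul_nonneg hMstar.le h4)])
  have hμ0 : Filter.Tendsto μ Filter.atTop (nhds 0) := hμs.tendsto_atTop_zero
  have hlam0 : Filter.Tendsto lam Filter.atTop (nhds 0) := hlams.tendsto_atTop_zero
  -- ρ n : slack for one application of key bounds with base bound B
  set B₂ := B + ((Mstar*B + φ M) * (∑' k, μ k) + (∑' k, lam k)) with hB₂def
  have hρ0 : Filter.Tendsto (fun n => (Mstar*B + φ M) * μ n + lam n) Filter.atTop (nhds 0) := by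
    simpa using (hμ0.const_mul (Mstar*B + φ M)).add hlam0
  have hσ0 : Filter.Tendsto (fun n => (Mstar*B₂ + φ M) * μ n + lam n) Filter.atTop (nhds 0) := by
    simpa using (hμ0.const_mul (Mstar*B₂ + φ M)).add hlam0
  have hMBnn : 0 ≤ Mstar*B + φ M := by linarith [mul_nonneg hMstar.le hBnn]
  have hyb : ∀ n, 1 ≤ n → ‖y n - p‖ ≤ ‖x n - p‖ + ((Mstar*B + φ M) * μ n + lam n) := by
    intro n hn
    have h1 := hybound n hn
    have h2 := hdB n
    linarith [h1, mul_le_mul_of_nonneg_left h2 (mul_nonneg hMstar.le (hμ n))]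
  have hyB : ∀ n, 1 ≤ n → ‖y n - p‖ ≤ B₂ := by
    intro n hn
    have h1 := hyb n hn
    have h2 := hdB n
    have h3 := hCμ n
    have h4 := hClam n
    rw [hB₂def]
    linarith [h1, h2, h4, mul_le_mul_of_nonneg_left h3 hMBnn]
  have hB₂nn : 0 ≤ B₂ := le_trans (norm_nonneg (y 1 - p)) (hyB 1 le_rfl)
  have hMB₂nn : 0 ≤ Mstar*B₂ + φ M := by linarith [mul_nonneg hMstar.le hB₂nn]
  -- second level bounds
  have hub : ∀ n, 1 ≤ n → ‖(P ∘ T₁)^[n] (y n) - p‖ ≤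
      ‖x n - p‖ + (((Mstar*B + φ M) * μ n + lam n) + ((Mstar*B₂ + φ M) * μ n + lam n)) := by
    intro n hn
    have h1 := key₁ (y n) (hyK n hn) n hn
    have h2 := hyb n hn
    have h3 := hyB n hn
    linarith [h1, h2, mul_le_mul_of_nonneg_left h3 (mul_nonneg hMstar.le (hμ n))]
  have hvb : ∀ n, 1 ≤ n → ‖(P ∘ T₂)^[n] (y n) - p‖ ≤
      ‖x n - p‖ + (((Mstar*B + φ M) * μ n + lam n) + ((Mstar*B₂ + φ M) * μ n + lam n)) := by
    intro n hn
    have h1 := key₂ (y n) (hyK n hn) n hn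
    have h2 := hyb n hn
    have h3 := hyB n hn
    linarith [h1, h2, mul_le_mul_of_nonneg_left h3 (mul_nonneg hMstar.le (hμ n))]
  have hvb1 : ∀ n, 1 ≤ n → ‖(P ∘ T₁)^[n] (x n) - p‖ ≤
      ‖x n - p‖ + ((Mstar*B + φ M) * μ n + lam n) := by
    intro n hn
    have h1 := key₁ (x n) (hxK n) n hn
    have h2 := hdB n
    linarith [h1, mul_le_mul_of_nonneg_left h2 (mul_nonneg hMstar.le (hμ n))]
  -- eventual bound helper
  have hEvLe : ∀ (f g : ℕ → ℝ), (∀ n, 1 ≤ n → f n ≤ g n) →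
      Filter.Tendsto g Filter.atTop (nhds l) → ∀ η, 0 < η →
      ∀ᶠ n in Filter.atTop, f n ≤ l + η := by
    intro f g hfg hg η hη
    have h1 : ∀ᶠ n in Filter.atTop, g n < l + η :=
      hg.eventually (eventually_lt_nhds (by linarith))
    filter_upwards [h1, Filter.eventually_ge_atTop 1] with n h1n h2n
    exact le_of_lt (lt_of_le_of_lt (hfg n h2n) h1n)
  have hρ₂lim : Filter.Tendsto (fun n => ‖x n - p‖ +
      (((Mstar*B + φ M) * μ n + lam n) + ((Mstar*B₂ + φ M) * μ n + lam n)))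
      Filter.atTop (nhds l) := by
    simpa using hdl.add (hρ0.add hσ0)
  have hdshift : Filter.Tendsto (fun n => ‖x (n+1) - p‖) Filter.atTop (nhds l) :=
    hdl.comp (Filter.tendsto_add_atTop_nat 1)
  -- Schu application 1:
  have hΓ : Filter.Tendsto (fun n => ‖(P ∘ T₁)^[n] (y n) - (P ∘ T₂)^[n] (y n)‖)
      Filter.atTop (nhds 0) := by
    have h := mySchu l ε hl0 hε0 (fun n => (P ∘ T₁)^[n] (y n) - p)
      (fun n => (P ∘ T₂)^[n] (y n) - p) (fun n => 1 - α n)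
      (fun n => show (1 - α n) ∈ Set.Icc ε (1 - ε) from
        ⟨by linarith [(hα n).2], by linarith [(hα n).1]⟩)
      (fun η hη => hEvLe _ _ hub hρ₂lim η hη)
      (fun η hη => hEvLe _ _ hvb hρ₂lim η hη)
      (by
        refine Filter.Tendsto.congr' ?_ hdshift
        filter_upwards [Filter.eventually_ge_atTop 1] with n hn
        rw [hx n hn]
        congr 1
        module)
    have heq : (fun n => ‖((P ∘ T₁)^[n] (y n) - p) - ((P ∘ T₂)^[n] (y n) - p)‖)
        = (fun n => ‖(P ∘ T₁)^[n] (y n) - (P ∘ T₂)^[n] (y n)‖) := by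
      funext n
      rw [sub_sub_sub_cancel_right]
    exact heq ▸ h
  -- limit of ‖y n - p‖
  have hylim : Filter.Tendsto (fun n => ‖y n - p‖) Filter.atTop (nhds l) := by
    have hlo : Filter.Tendsto (fun n => ‖x (n+1) - p‖ - ((Mstar*B₂ + φ M) * μ n + lam n))
        Filter.atTop (nhds l) := by simpa using hdshift.sub hσ0
    have hhi : Filter.Tendsto (fun n => ‖x n - p‖ + ((Mstar*B + φ M) * μ n + lam n))
        Filter.atTop (nhds l) := by simpa using hdl.add hρ0
    refine tendsto_of_tendsto_of_tendsto_of_le_of_le' hlo hhi ?_ ?_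
    · filter_upwards [Filter.eventually_ge_atTop 1] with n hn
      have h1 := hd1 n hn
      have h3 := hyB n hn
      linarith [h1, mul_le_mul_of_nonneg_left h3 (mul_nonneg hMstar.le (hμ n))]
    · filter_upwards [Filter.eventually_ge_atTop 1] with n hn
      exact hyb n hn
  -- Schu application 2:
  have hΔ : Filter.Tendsto (fun n => ‖x n - (P ∘ T₁)^[n] (x n)‖) Filter.atTop (nhds 0) := by
    have h := mySchu l ε hl0 hε0 (fun n => x n - p)
      (fun n => (P ∘ T₁)^[n] (x n) - p) (fun n => 1 - β n)
      (fun n => show (1 - β n) ∈ Set.Icc ε (1 - ε) from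
        ⟨by linarith [(hβ n).2], by linarith [(hβ n).1]⟩)
      (fun η hη => hEvLe _ _ (fun n _ => le_refl _) hdl η hη)
      (fun η hη => hEvLe _ _ hvb1 (by simpa using hdl.add hρ0) η hη)
      (by
        refine Filter.Tendsto.congr' ?_ hylim
        filter_upwards [Filter.eventually_ge_atTop 1] with n hn
        rw [hy n hn]
        congr 1
        module)
    have heq : (fun n => ‖(x n - p) - ((P ∘ T₁)^[n] (x n) - p)‖)
        = (fun n => ‖x n - (P ∘ T₁)^[n] (x n)‖) := by
      funext n
      rw [sub_sub_sub_cancel_right]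
    exact heq ▸ h
  -- elementary consequences
  have hxy : ∀ n, 1 ≤ n → ‖y n - x n‖ ≤ ‖x n - (P ∘ T₁)^[n] (x n)‖ := by
    intro n hn
    have h : y n - x n = β n • ((P ∘ T₁)^[n] (x n) - x n) := by rw [hy n hn]; module
    rw [h, norm_smul, Real.norm_eq_abs, abs_of_nonneg (hβ0 n), norm_sub_rev]
    exact mul_le_of_le_one_left (norm_nonneg _) (hβ1 n)
  have he₁ : ∀ n, 1 ≤ n → ‖x (n+1) - (P ∘ T₁)^[n] (y n)‖ ≤
      ‖(P ∘ T₁)^[n] (y n) - (P ∘ T₂)^[n] (y n)‖ := by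
    intro n hn
    have h : x (n+1) - (P ∘ T₁)^[n] (y n)
        = α n • ((P ∘ T₂)^[n] (y n) - (P ∘ T₁)^[n] (y n)) := by rw [hx n hn]; module
    rw [h, norm_smul, Real.norm_eq_abs, abs_of_nonneg (hα0 n), norm_sub_rev]
    exact mul_le_of_le_one_left (norm_nonneg _) (hα1 n)
  have he₂ : ∀ n, 1 ≤ n → ‖x (n+1) - (P ∘ T₂)^[n] (y n)‖ ≤
      ‖(P ∘ T₁)^[n] (y n) - (P ∘ T₂)^[n] (y n)‖ := by
    intro n hn
    have h : x (n+1) - (P ∘ T₂)^[n] (y n)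
        = (1 - α n) • ((P ∘ T₁)^[n] (y n) - (P ∘ T₂)^[n] (y n)) := by rw [hx n hn]; module
    rw [h, norm_smul, Real.norm_eq_abs, abs_of_nonneg (by linarith [hα1 n])]
    exact mul_le_of_le_one_left (norm_nonneg _) (by linarith [hα0 n])
  have hq2 : ∀ n, 1 ≤ n → ‖(P ∘ T₁)^[n] (y n) - (P ∘ T₁)^[n] (x n)‖ ≤
      L * ‖x n - (P ∘ T₁)^[n] (x n)‖ := by
    intro n hn
    exact le_trans (hLip₁ (y n) (hyK n hn) (x n) (hxK n) n hn)
      (mul_le_mul_of_nonneg_left (hxy n hn) hL.le)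
  have hq2' : ∀ n, 1 ≤ n → ‖(P ∘ T₂)^[n] (y n) - (P ∘ T₂)^[n] (x n)‖ ≤
      L * ‖x n - (P ∘ T₁)^[n] (x n)‖ := by
    intro n hn
    exact le_trans (hLip₂ (y n) (hyK n hn) (x n) (hxK n) n hn)
      (mul_le_mul_of_nonneg_left (hxy n hn) hL.le)
  -- Sb n bounds ‖x (n+1) - x n‖
  have hs : ∀ n, 1 ≤ n → ‖x (n+1) - x n‖ ≤
      ‖(P ∘ T₁)^[n] (y n) - (P ∘ T₂)^[n] (y n)‖ + L * ‖x n - (P ∘ T₁)^[n] (x n)‖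
      + ‖x n - (P ∘ T₁)^[n] (x n)‖ := by
    intro n hn
    have h : x (n+1) - x n = (x (n+1) - (P ∘ T₁)^[n] (y n))
        + ((P ∘ T₁)^[n] (y n) - (P ∘ T₁)^[n] (x n)) + ((P ∘ T₁)^[n] (x n) - x n) := by abel
    rw [h]
    have h2 := norm_add₃_le (a := x (n+1) - (P ∘ T₁)^[n] (y n))
      (b := (P ∘ T₁)^[n] (y n) - (P ∘ T₁)^[n] (x n)) (c := (P ∘ T₁)^[n] (x n) - x n)
    rw [norm_sub_rev ((P ∘ T₁)^[n] (x n)) (x n)] at h2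
    linarith [he₁ n hn, hq2 n hn]
  have hΔ₂ : ∀ n, 1 ≤ n → ‖x n - (P ∘ T₂)^[n] (x n)‖ ≤
      (‖(P ∘ T₁)^[n] (y n) - (P ∘ T₂)^[n] (y n)‖ + L * ‖x n - (P ∘ T₁)^[n] (x n)‖
        + ‖x n - (P ∘ T₁)^[n] (x n)‖)
      + ‖(P ∘ T₁)^[n] (y n) - (P ∘ T₂)^[n] (y n)‖ + L * ‖x n - (P ∘ T₁)^[n] (x n)‖ := by
    intro n hn
    have h : x n - (P ∘ T₂)^[n] (x n) = (x n - x (n+1)) + (x (n+1) - (P ∘ T₂)^[n] (y n))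
        + ((P ∘ T₂)^[n] (y n) - (P ∘ T₂)^[n] (x n)) := by abel
    rw [h]
    have h2 := norm_add₃_le (a := x n - x (n+1)) (b := x (n+1) - (P ∘ T₂)^[n] (y n))
      (c := (P ∘ T₂)^[n] (y n) - (P ∘ T₂)^[n] (x n))
    rw [norm_sub_rev (x n) (x (n+1))] at h2
    linarith [hs n hn, he₂ n hn, hq2' n hn]
  -- abbreviations for the bounding sequences (as tendsto facts)
  have hSb0 : Filter.Tendsto (fun n => ‖(P ∘ T₁)^[n] (y n) - (P ∘ T₂)^[n] (y n)‖
      + L * ‖x n - (P ∘ T₁)^[n] (x n)‖ + ‖x n - (P ∘ T₁)^[n] (x n)‖)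
      Filter.atTop (nhds 0) := by
    simpa using (hΓ.add (hΔ.const_mul L)).add hΔ
  have hD₂0 : Filter.Tendsto (fun n => (‖(P ∘ T₁)^[n] (y n) - (P ∘ T₂)^[n] (y n)‖
      + L * ‖x n - (P ∘ T₁)^[n] (x n)‖ + ‖x n - (P ∘ T₁)^[n] (x n)‖)
      + ‖(P ∘ T₁)^[n] (y n) - (P ∘ T₂)^[n] (y n)‖ + L * ‖x n - (P ∘ T₁)^[n] (x n)‖)
      Filter.atTop (nhds 0) := by
    simpa using (hSb0.add hΓ).add (hΔ.const_mul L)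
  constructor
  · rw [← Filter.tendsto_add_atTop_iff_nat 1]
    apply squeeze_zero' (g := fun n => ‖x (n+1) - (P ∘ T₁)^[n+1] (x (n+1))‖
      + L * (‖(P ∘ T₁)^[n] (y n) - (P ∘ T₂)^[n] (y n)‖ + L * ‖x n - (P ∘ T₁)^[n] (x n)‖
        + ‖x n - (P ∘ T₁)^[n] (x n)‖)
      + L * (‖x n - (P ∘ T₁)^[n] (x n)‖
        + (‖(P ∘ T₁)^[n] (y n) - (P ∘ T₂)^[n] (y n)‖ + L * ‖x n - (P ∘ T₁)^[n] (x n)‖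
          + ‖x n - (P ∘ T₁)^[n] (x n)‖)))
      (Filter.Eventually.of_forall fun n => norm_nonneg _) ?_ ?_
    · filter_upwards [Filter.eventually_ge_atTop 1] with n hn
      have hdecomp : x (n+1) - (P ∘ T₁) (x (n+1))
          = (x (n+1) - (P ∘ T₁)^[n+1] (x (n+1)))
          + ((P ∘ T₁)^[n+1] (x (n+1)) - (P ∘ T₁)^[n+1] (x n))
          + ((P ∘ T₁)^[n+1] (x n) - (P ∘ T₁) (x (n+1))) := by abel
      rw [hdecomp]
      have h2 := norm_add₃_le (a := x (n+1) - (P ∘ T₁)^[n+1] (x (n+1)))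
        (b := (P ∘ T₁)^[n+1] (x (n+1)) - (P ∘ T₁)^[n+1] (x n))
        (c := (P ∘ T₁)^[n+1] (x n) - (P ∘ T₁) (x (n+1)))
      have h3 := hLip₁ (x (n+1)) (hxK (n+1)) (x n) (hxK n) (n+1) (by omega)
      have h4 : ‖(P ∘ T₁)^[n+1] (x n) - (P ∘ T₁) (x (n+1))‖
          ≤ L * ‖(P ∘ T₁)^[n] (x n) - x (n+1)‖ := by
        rw [Function.iterate_succ_apply']
        have := hLip₁ ((P ∘ T₁)^[n] (x n)) (hKiter1 (x n) n hn) (x (n+1)) (hxK (n+1)) 1 le_rfl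
        simpa using this
      have h5 : ‖(P ∘ T₁)^[n] (x n) - x (n+1)‖ ≤ ‖x n - (P ∘ T₁)^[n] (x n)‖ + ‖x (n+1) - x n‖ := by
        have hd2 : (P ∘ T₁)^[n] (x n) - x (n+1) = ((P ∘ T₁)^[n] (x n) - x n) + (x n - x (n+1)) := by
          abel
        rw [hd2]
        have := norm_add_le ((P ∘ T₁)^[n] (x n) - x n) (x n - x (n+1))
        rw [norm_sub_rev ((P ∘ T₁)^[n] (x n)) (x n), norm_sub_rev (x n) (x (n+1))] at this
        linarith
      have hsb := hs n hn
      linarith [h2, h3, h4, mul_le_mul_of_nonneg_left hsb hL.le,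
        mul_le_mul_of_nonneg_left h5 hL.le]
    · simpa using ((hΔ.comp (Filter.tendsto_add_atTop_nat 1)).add (hSb0.const_mul L)).add
        ((hΔ.add hSb0).const_mul L)
  · rw [← Filter.tendsto_add_atTop_iff_nat 1]
    apply squeeze_zero' (g := fun n => ((‖(P ∘ T₁)^[n+1] (y (n+1)) - (P ∘ T₂)^[n+1] (y (n+1))‖
        + L * ‖x (n+1) - (P ∘ T₁)^[n+1] (x (n+1))‖ + ‖x (n+1) - (P ∘ T₁)^[n+1] (x (n+1))‖)
        + ‖(P ∘ T₁)^[n+1] (y (n+1)) - (P ∘ T₂)^[n+1] (y (n+1))‖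
        + L * ‖x (n+1) - (P ∘ T₁)^[n+1] (x (n+1))‖)
      + L * (‖(P ∘ T₁)^[n] (y n) - (P ∘ T₂)^[n] (y n)‖ + L * ‖x n - (P ∘ T₁)^[n] (x n)‖
        + ‖x n - (P ∘ T₁)^[n] (x n)‖)
      + L * (((‖(P ∘ T₁)^[n] (y n) - (P ∘ T₂)^[n] (y n)‖ + L * ‖x n - (P ∘ T₁)^[n] (x n)‖
          + ‖x n - (P ∘ T₁)^[n] (x n)‖)
        + ‖(P ∘ T₁)^[n] (y n) - (P ∘ T₂)^[n] (y n)‖ + L * ‖x n - (P ∘ T₁)^[n] (x n)‖)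
        + (‖(P ∘ T₁)^[n] (y n) - (P ∘ T₂)^[n] (y n)‖ + L * ‖x n - (P ∘ T₁)^[n] (x n)‖
          + ‖x n - (P ∘ T₁)^[n] (x n)‖)))
      (Filter.Eventually.of_forall fun n => norm_nonneg _) ?_ ?_
    · filter_upwards [Filter.eventually_ge_atTop 1] with n hn
      have hdecomp : x (n+1) - (P ∘ T₂) (x (n+1))
          = (x (n+1) - (P ∘ T₂)^[n+1] (x (n+1)))
          + ((P ∘ T₂)^[n+1] (x (n+1)) - (P ∘ T₂)^[n+1] (x n))
          + ((P ∘ T₂)^[n+1] (x n) - (P ∘ T₂) (x (n+1))) := by abel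
      rw [hdecomp]
      have h2 := norm_add₃_le (a := x (n+1) - (P ∘ T₂)^[n+1] (x (n+1)))
        (b := (P ∘ T₂)^[n+1] (x (n+1)) - (P ∘ T₂)^[n+1] (x n))
        (c := (P ∘ T₂)^[n+1] (x n) - (P ∘ T₂) (x (n+1)))
      have h3 := hLip₂ (x (n+1)) (hxK (n+1)) (x n) (hxK n) (n+1) (by omega)
      have h4 : ‖(P ∘ T₂)^[n+1] (x n) - (P ∘ T₂) (x (n+1))‖
          ≤ L * ‖(P ∘ T₂)^[n] (x n) - x (n+1)‖ := by
        rw [Function.iterate_succ_apply']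
        have := hLip₂ ((P ∘ T₂)^[n] (x n)) (hKiter2 (x n) n hn) (x (n+1)) (hxK (n+1)) 1 le_rfl
        simpa using this
      have h5 : ‖(P ∘ T₂)^[n] (x n) - x (n+1)‖ ≤ ‖x n - (P ∘ T₂)^[n] (x n)‖ + ‖x (n+1) - x n‖ := by
        have hd2 : (P ∘ T₂)^[n] (x n) - x (n+1) = ((P ∘ T₂)^[n] (x n) - x n) + (x n - x (n+1)) := by
          abel
        rw [hd2]
        have := norm_add_le ((P ∘ T₂)^[n] (x n) - x n) (x n - x (n+1))
        rw [norm_sub_rev ((P ∘ T₂)^[n] (x n)) (x n), norm_sub_rev (x n) (x (n+1))] at this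
        linarith
      have hsb := hs n hn
      have hD₂n := hΔ₂ n hn
      have hD₂n1 := hΔ₂ (n+1) (by omega)
      linarith [h2, h3, h4, mul_le_mul_of_nonneg_left hsb hL.le,
        mul_le_mul_of_nonneg_left h5 hL.le,
        mul_le_mul_of_nonneg_left hD₂n hL.le, hD₂n1]
    · have hD₂shift := hD₂0.comp (Filter.tendsto_add_atTop_nat 1)
      simpa using (hD₂shift.add (hSb0.const_mul L)).add ((hD₂0.add hSb0).const_mul L)
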